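/- Let k ≥ 0, η = 7/3, h₀ > 0 and q₀ ∈ ℝ². Define q : [0, ∞) → ℝ² by q(t) = h₀^η q₀ / (h₀^η + k t ‖q₀‖), where ‖·‖ is the Euclidean norm on ℝ². Then q(0) = q₀ and for every t ≥ 0, q is differentiable at t with q'(t) = −k q(t) ‖q(t)‖ h₀^{−η}. In other words, (h(t), q(t)) = (h₀, h₀^η q₀/(h₀^η + k t ‖q₀‖)) is the exact solution of the two-dimensional friction ODE system h' = 0, q' = −k q ‖q‖ h^{−η} with initial data (h₀, q₀). -/

import Mathlib

/-- Exact solution of the 2D friction ODE: with `η = 7/3` and `q₀ ∈ ℝ²`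
(Euclidean norm), the function `q(t) = (h₀^η/(h₀^η + k t ‖q₀‖)) q₀`
satisfies `q(0) = q₀` and `q'(t) = −k ‖q(t)‖ h₀^{−η} q(t)` for all `t ≥ 0`. -/
theorem friction_ode_exact_solution_2d (k h₀ : ℝ) (q₀ : EuclideanSpace ℝ (Fin 2))
    (hk : 0 ≤ k) (hh₀ : 0 < h₀) :
    let η : ℝ := 7 / 3
    let q : ℝ → EuclideanSpace ℝ (Fin 2) :=
      fun t => (h₀ ^ η / (h₀ ^ η + k * t * ‖q₀‖)) • q₀
    q 0 = q₀ ∧ ∀ t : ℝ, 0 ≤ t →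
      HasDerivAt q ((-(k * ‖q t‖ * h₀ ^ (-η))) • q t) t := by
  intro η q
  have hA : 0 < h₀ ^ η := Real.rpow_pos_of_pos hh₀ η
  constructor
  · show (h₀ ^ η / (h₀ ^ η + k * 0 * ‖q₀‖)) • q₀ = q₀
    rw [mul_zero, zero_mul, add_zero, div_self hA.ne', one_smul]
  · intro t ht
    have hg : 0 < h₀ ^ η + k * t * ‖q₀‖ := by positivity
    have hf : HasDerivAt (fun s : ℝ => h₀ ^ η / (h₀ ^ η + k * s * ‖q₀‖))
        ((0 * (h₀ ^ η + k * t * ‖q₀‖) - h₀ ^ η * (k * 1 * ‖q₀‖)) /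
          (h₀ ^ η + k * t * ‖q₀‖) ^ 2) t := by
      apply HasDerivAt.fun_div (d := fun s => h₀ ^ η + k * s * ‖q₀‖) (hasDerivAt_const t _) _ hg.ne'
      have h1 : HasDerivAt (fun s : ℝ => k * s * ‖q₀‖) (k * 1 * ‖q₀‖) t :=
        ((hasDerivAt_id t).const_mul k).mul_const ‖q₀‖
      simpa using h1.const_add (h₀ ^ η)
    have hderiv : HasDerivAt q
        (((0 * (h₀ ^ η + k * t * ‖q₀‖) - h₀ ^ η * (k * 1 * ‖q₀‖)) /
          (h₀ ^ η + k * t * ‖q₀‖) ^ 2) • q₀) t := hf.smul_const q₀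
    convert hderiv using 1
    have hnq : ‖q t‖ = h₀ ^ η / (h₀ ^ η + k * t * ‖q₀‖) * ‖q₀‖ := by
      show ‖(h₀ ^ η / (h₀ ^ η + k * t * ‖q₀‖)) • q₀‖ = _
      rw [norm_smul, Real.norm_eq_abs, abs_of_pos (by positivity)]
    show (-(k * ‖q t‖ * h₀ ^ (-η))) • ((h₀ ^ η / (h₀ ^ η + k * t * ‖q₀‖)) • q₀) = _
    rw [smul_smul, hnq, Real.rpow_neg hh₀.le]
    congr 1
    field_simp
    ring
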